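/- For each d with 3 ≤ d ≤ 6, let V_d ⊂ ℤ^d be the set of integer vectors e_i + e_j − e_k with 1 ≤ i, j, k ≤ d, i ≠ k, j ≠ k, and one of i + j = k, i = j + k, j = i + k. Then the additive subgroup L of ℤ^d generated by V_d has index 2 in ℤ^d. -/

import Mathlib

/-- The vertex set (as integer vectors) of the moment polytope of the Kähler
homogeneous space with `b₂ = 1` and `d` isotropy summands. -/
def kahlerVerticesZ (d : ℕ) : Set (Fin d → ℤ) :=
  {x | ∃ i j k : Fin d, k ≠ i ∧ k ≠ j ∧
    ((i.val + 1) + (j.val + 1) = k.val + 1 ∨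
      i.val + 1 = (j.val + 1) + (k.val + 1) ∨
      j.val + 1 = (i.val + 1) + (k.val + 1)) ∧
    x = Pi.single i (1 : ℤ) + Pi.single j (1 : ℤ) - Pi.single k (1 : ℤ)}

private def sgl {d : ℕ} (i : Fin d) : Fin d → ℤ := Pi.single i 1

private lemma vert_mem {d : ℕ} (i j k : Fin d) (hki : k ≠ i) (hkj : k ≠ j)
    (hrel : (i.val + 1) + (j.val + 1) = k.val + 1 ∨
      i.val + 1 = (j.val + 1) + (k.val + 1) ∨
      j.val + 1 = (i.val + 1) + (k.val + 1)) :
    sgl i + sgl j - sgl k ∈ AddSubgroup.closure (kahlerVerticesZ d) :=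
  AddSubgroup.subset_closure ⟨i, j, k, hki, hkj, hrel, rfl⟩

private def psi (d : ℕ) : (Fin d → ℤ) →+ ZMod 2 :=
  (Int.castAddHom (ZMod 2)).comp
    { toFun := fun x => ∑ i : Fin d, ((i.val : ℤ) + 1) * x i
      map_zero' := by simp
      map_add' := by intro a b; simp [mul_add, Finset.sum_add_distrib] }

private lemma psi_single {d : ℕ} (i : Fin d) (c : ℤ) :
    (∑ n : Fin d, ((n.val : ℤ) + 1) * ((Pi.single i c : Fin d → ℤ)) n)
      = ((i.val : ℤ) + 1) * c := by
  rw [Finset.sum_eq_single i]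
  · simp
  · intro b _ hb; simp [Pi.single_apply, hb]
  · simp

private lemma closure_le_ker (d : ℕ) :
    AddSubgroup.closure (kahlerVerticesZ d) ≤ (psi d).ker := by
  rw [AddSubgroup.closure_le]
  rintro x ⟨i, j, k, hki, hkj, hrel, rfl⟩
  simp only [SetLike.mem_coe, AddMonoidHom.mem_ker, psi, AddMonoidHom.coe_comp,
    AddMonoidHom.coe_mk, ZeroHom.coe_mk, Function.comp_apply, Int.coe_castAddHom]
  have : (∑ n : Fin d, ((n.val : ℤ) + 1) *
      ((Pi.single i 1 + Pi.single j 1 - Pi.single k 1 : Fin d → ℤ)) n) =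
      ((i.val : ℤ) + 1) + ((j.val : ℤ) + 1) - ((k.val : ℤ) + 1) := by
    simp only [Pi.add_apply, Pi.sub_apply, mul_add, mul_sub, Finset.sum_add_distrib,
      Finset.sum_sub_distrib, psi_single]
    ring
  rw [this, ZMod.intCast_zmod_eq_zero_iff_dvd]
  omega

private lemma ker_index (d : ℕ) (hd : 0 < d) : (psi d).ker.index = 2 := by
  rw [AddSubgroup.index_ker]
  have hsurj : Function.Surjective (psi d) := by
    intro z
    fin_cases z
    · exact ⟨0, by simp [psi]; rfl⟩
    · refine ⟨Pi.single ⟨0, hd⟩ 1, ?_⟩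
      simp [psi, psi_single]; rfl
  rw [AddMonoidHom.range_eq_top.mpr hsurj, AddSubgroup.card_top,
    Nat.card_eq_fintype_card, ZMod.card]

/-- For `3 ≤ d ≤ 6`, the subgroup of `ℤ^d` generated by the vertices of the moment
polytope has index `2`. -/
theorem stmt_16 (d : ℕ) (h3 : 3 ≤ d) (h6 : d ≤ 6) :
    (AddSubgroup.closure (kahlerVerticesZ d)).index = 2 := by
  have hker : AddSubgroup.closure (kahlerVerticesZ d) = (psi d).ker := by
    refine le_antisymm (closure_le_ker d) ?_
    intro x hx
    rw [AddMonoidHom.mem_ker] at hx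
    interval_cases d
    · -- d = 3
      simp only [psi, AddMonoidHom.coe_comp, AddMonoidHom.coe_mk, ZeroHom.coe_mk,
        Function.comp_apply, Int.coe_castAddHom, Fin.sum_univ_three] at hx
      rw [ZMod.intCast_zmod_eq_zero_iff_dvd] at hx
      obtain ⟨m, hm⟩ := hx
      norm_num at hm
      have ha := vert_mem (0 : Fin 3) 0 1 (by decide) (by decide) (by decide)
      have hb := vert_mem (0 : Fin 3) 1 2 (by decide) (by decide) (by decide)
      have hc := vert_mem (2 : Fin 3) 0 1 (by decide) (by decide) (by decide)
      have h1 : sgl (1 : Fin 3) ∈ AddSubgroup.closure (kahlerVerticesZ 3) := by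
        have h := sub_mem (add_mem hb hc) ha
        have e : (sgl (0:Fin 3) + sgl 1 - sgl 2) + (sgl 2 + sgl 0 - sgl 1)
            - (sgl 0 + sgl 0 - sgl 1) = sgl (1:Fin 3) := by abel
        rwa [e] at h
      have h02 : sgl (0 : Fin 3) - sgl 2 ∈ AddSubgroup.closure (kahlerVerticesZ 3) := by
        have h := sub_mem ha hc
        have e : (sgl (0:Fin 3) + sgl 0 - sgl 1) - (sgl 2 + sgl 0 - sgl 1)
            = sgl (0:Fin 3) - sgl 2 := by abel
        rwa [e] at h
      have h00 : sgl (0 : Fin 3) + sgl 0 ∈ AddSubgroup.closure (kahlerVerticesZ 3) := by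
        have h := add_mem hb hc
        have e : (sgl (0:Fin 3) + sgl 1 - sgl 2) + (sgl 2 + sgl 0 - sgl 1)
            = sgl (0:Fin 3) + sgl 0 := by abel
        rwa [e] at h
      have key : x = x 1 • sgl (1 : Fin 3) + (-(x 2)) • (sgl (0 : Fin 3) - sgl 2)
          + (m - x 1 - x 2) • (sgl (0 : Fin 3) + sgl 0) := by
        funext n
        fin_cases n <;> simp [sgl, Pi.single_apply] <;> linarith
      rw [key]
      exact add_mem (add_mem (AddSubgroup.zsmul_mem _ h1 _) (AddSubgroup.zsmul_mem _ h02 _))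
        (AddSubgroup.zsmul_mem _ h00 _)
    · -- d = 4
      simp only [psi, AddMonoidHom.coe_comp, AddMonoidHom.coe_mk, ZeroHom.coe_mk,
        Function.comp_apply, Int.coe_castAddHom, Fin.sum_univ_four] at hx
      rw [ZMod.intCast_zmod_eq_zero_iff_dvd] at hx
      obtain ⟨m, hm⟩ := hx
      norm_num [show ((3:Fin 4).val) = 3 from rfl] at hm
      have ha := vert_mem (0 : Fin 4) 0 1 (by decide) (by decide) (by decide)
      have hb := vert_mem (0 : Fin 4) 1 2 (by decide) (by decide) (by decide)
      have hc := vert_mem (2 : Fin 4) 0 1 (by decide) (by decide) (by decide)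
      have hd' := vert_mem (3 : Fin 4) 2 0 (by decide) (by decide) (by decide)
      have h1 : sgl (1 : Fin 4) ∈ AddSubgroup.closure (kahlerVerticesZ 4) := by
        have h := sub_mem (add_mem hb hc) ha
        have e : (sgl (0:Fin 4) + sgl 1 - sgl 2) + (sgl 2 + sgl 0 - sgl 1)
            - (sgl 0 + sgl 0 - sgl 1) = sgl (1:Fin 4) := by abel
        rwa [e] at h
      have h02 : sgl (0 : Fin 4) - sgl 2 ∈ AddSubgroup.closure (kahlerVerticesZ 4) := by
        have h := sub_mem ha hc
        have e : (sgl (0:Fin 4) + sgl 0 - sgl 1) - (sgl 2 + sgl 0 - sgl 1)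
            = sgl (0:Fin 4) - sgl 2 := by abel
        rwa [e] at h
      have h00 : sgl (0 : Fin 4) + sgl 0 ∈ AddSubgroup.closure (kahlerVerticesZ 4) := by
        have h := add_mem hb hc
        have e : (sgl (0:Fin 4) + sgl 1 - sgl 2) + (sgl 2 + sgl 0 - sgl 1)
            = sgl (0:Fin 4) + sgl 0 := by abel
        rwa [e] at h
      have h3' : sgl (3 : Fin 4) ∈ AddSubgroup.closure (kahlerVerticesZ 4) := by
        have h := add_mem hd' h02
        have e : (sgl (3:Fin 4) + sgl 2 - sgl 0) + (sgl 0 - sgl 2) = sgl (3:Fin 4) := by abel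
        rwa [e] at h
      have key : x = x 1 • sgl (1 : Fin 4) + x 3 • sgl (3 : Fin 4)
          + (-(x 2)) • (sgl (0 : Fin 4) - sgl 2)
          + (m - x 1 - x 2 - 2 * x 3) • (sgl (0 : Fin 4) + sgl 0) := by
        funext n
        fin_cases n <;> simp [sgl, Pi.single_apply] <;> linarith
      rw [key]
      exact add_mem (add_mem (add_mem (AddSubgroup.zsmul_mem _ h1 _)
        (AddSubgroup.zsmul_mem _ h3' _)) (AddSubgroup.zsmul_mem _ h02 _))
        (AddSubgroup.zsmul_mem _ h00 _)
    · -- d = 5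
      simp only [psi, AddMonoidHom.coe_comp, AddMonoidHom.coe_mk, ZeroHom.coe_mk,
        Function.comp_apply, Int.coe_castAddHom, Fin.sum_univ_five] at hx
      rw [ZMod.intCast_zmod_eq_zero_iff_dvd] at hx
      obtain ⟨m, hm⟩ := hx
      norm_num [show ((3:Fin 5).val) = 3 from rfl, show ((4:Fin 5).val) = 4 from rfl] at hm
      have ha := vert_mem (0 : Fin 5) 0 1 (by decide) (by decide) (by decide)
      have hb := vert_mem (0 : Fin 5) 1 2 (by decide) (by decide) (by decide)
      have hc := vert_mem (2 : Fin 5) 0 1 (by decide) (by decide) (by decide)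
      have hd' := vert_mem (3 : Fin 5) 2 0 (by decide) (by decide) (by decide)
      have he := vert_mem (0 : Fin 5) 3 4 (by decide) (by decide) (by decide)
      have h1 : sgl (1 : Fin 5) ∈ AddSubgroup.closure (kahlerVerticesZ 5) := by
        have h := sub_mem (add_mem hb hc) ha
        have e : (sgl (0:Fin 5) + sgl 1 - sgl 2) + (sgl 2 + sgl 0 - sgl 1)
            - (sgl 0 + sgl 0 - sgl 1) = sgl (1:Fin 5) := by abel
        rwa [e] at h
      have h02 : sgl (0 : Fin 5) - sgl 2 ∈ AddSubgroup.closure (kahlerVerticesZ 5) := by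
        have h := sub_mem ha hc
        have e : (sgl (0:Fin 5) + sgl 0 - sgl 1) - (sgl 2 + sgl 0 - sgl 1)
            = sgl (0:Fin 5) - sgl 2 := by abel
        rwa [e] at h
      have h00 : sgl (0 : Fin 5) + sgl 0 ∈ AddSubgroup.closure (kahlerVerticesZ 5) := by
        have h := add_mem hb hc
        have e : (sgl (0:Fin 5) + sgl 1 - sgl 2) + (sgl 2 + sgl 0 - sgl 1)
            = sgl (0:Fin 5) + sgl 0 := by abel
        rwa [e] at h
      have h3' : sgl (3 : Fin 5) ∈ AddSubgroup.closure (kahlerVerticesZ 5) := by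
        have h := add_mem hd' h02
        have e : (sgl (3:Fin 5) + sgl 2 - sgl 0) + (sgl 0 - sgl 2) = sgl (3:Fin 5) := by abel
        rwa [e] at h
      have h04 : sgl (0 : Fin 5) - sgl 4 ∈ AddSubgroup.closure (kahlerVerticesZ 5) := by
        have h := sub_mem he h3'
        have e : (sgl (0:Fin 5) + sgl 3 - sgl 4) - sgl 3 = sgl (0:Fin 5) - sgl 4 := by abel
        rwa [e] at h
      have key : x = x 1 • sgl (1 : Fin 5) + x 3 • sgl (3 : Fin 5)
          + (-(x 2)) • (sgl (0 : Fin 5) - sgl 2) + (-(x 4)) • (sgl (0 : Fin 5) - sgl 4)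
          + (m - x 1 - x 2 - 2 * x 3 - 2 * x 4) • (sgl (0 : Fin 5) + sgl 0) := by
        funext n
        fin_cases n <;> simp [sgl, Pi.single_apply] <;> linarith
      rw [key]
      exact add_mem (add_mem (add_mem (add_mem (AddSubgroup.zsmul_mem _ h1 _)
        (AddSubgroup.zsmul_mem _ h3' _)) (AddSubgroup.zsmul_mem _ h02 _))
        (AddSubgroup.zsmul_mem _ h04 _)) (AddSubgroup.zsmul_mem _ h00 _)
    · -- d = 6
      simp only [psi, AddMonoidHom.coe_comp, AddMonoidHom.coe_mk, ZeroHom.coe_mk,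
        Function.comp_apply, Int.coe_castAddHom, Fin.sum_univ_six] at hx
      rw [ZMod.intCast_zmod_eq_zero_iff_dvd] at hx
      obtain ⟨m, hm⟩ := hx
      norm_num [show ((3:Fin 6).val) = 3 from rfl, show ((4:Fin 6).val) = 4 from rfl,
        show ((5:Fin 6).val) = 5 from rfl] at hm
      have ha := vert_mem (0 : Fin 6) 0 1 (by decide) (by decide) (by decide)
      have hb := vert_mem (0 : Fin 6) 1 2 (by decide) (by decide) (by decide)
      have hc := vert_mem (2 : Fin 6) 0 1 (by decide) (by decide) (by decide)
      have hd' := vert_mem (3 : Fin 6) 2 0 (by decide) (by decide) (by decide)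
      have he := vert_mem (0 : Fin 6) 3 4 (by decide) (by decide) (by decide)
      have hf := vert_mem (1 : Fin 6) 3 5 (by decide) (by decide) (by decide)
      have h1 : sgl (1 : Fin 6) ∈ AddSubgroup.closure (kahlerVerticesZ 6) := by
        have h := sub_mem (add_mem hb hc) ha
        have e : (sgl (0:Fin 6) + sgl 1 - sgl 2) + (sgl 2 + sgl 0 - sgl 1)
            - (sgl 0 + sgl 0 - sgl 1) = sgl (1:Fin 6) := by abel
        rwa [e] at h
      have h02 : sgl (0 : Fin 6) - sgl 2 ∈ AddSubgroup.closure (kahlerVerticesZ 6) := by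
        have h := sub_mem ha hc
        have e : (sgl (0:Fin 6) + sgl 0 - sgl 1) - (sgl 2 + sgl 0 - sgl 1)
            = sgl (0:Fin 6) - sgl 2 := by abel
        rwa [e] at h
      have h00 : sgl (0 : Fin 6) + sgl 0 ∈ AddSubgroup.closure (kahlerVerticesZ 6) := by
        have h := add_mem hb hc
        have e : (sgl (0:Fin 6) + sgl 1 - sgl 2) + (sgl 2 + sgl 0 - sgl 1)
            = sgl (0:Fin 6) + sgl 0 := by abel
        rwa [e] at h
      have h3' : sgl (3 : Fin 6) ∈ AddSubgroup.closure (kahlerVerticesZ 6) := by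
        have h := add_mem hd' h02
        have e : (sgl (3:Fin 6) + sgl 2 - sgl 0) + (sgl 0 - sgl 2) = sgl (3:Fin 6) := by abel
        rwa [e] at h
      have h04 : sgl (0 : Fin 6) - sgl 4 ∈ AddSubgroup.closure (kahlerVerticesZ 6) := by
        have h := sub_mem he h3'
        have e : (sgl (0:Fin 6) + sgl 3 - sgl 4) - sgl 3 = sgl (0:Fin 6) - sgl 4 := by abel
        rwa [e] at h
      have h5 : sgl (5 : Fin 6) ∈ AddSubgroup.closure (kahlerVerticesZ 6) := by
        have h := sub_mem (add_mem h1 h3') hf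
        have e : (sgl (1:Fin 6) + sgl 3) - (sgl 1 + sgl 3 - sgl 5) = sgl (5:Fin 6) := by abel
        rwa [e] at h
      have key : x = x 1 • sgl (1 : Fin 6) + x 3 • sgl (3 : Fin 6) + x 5 • sgl (5 : Fin 6)
          + (-(x 2)) • (sgl (0 : Fin 6) - sgl 2) + (-(x 4)) • (sgl (0 : Fin 6) - sgl 4)
          + (m - x 1 - x 2 - 2 * x 3 - 2 * x 4 - 3 * x 5) • (sgl (0 : Fin 6) + sgl 0) := by
        funext n
        fin_cases n <;> simp [sgl, Pi.single_apply] <;> linarith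
      rw [key]
      exact add_mem (add_mem (add_mem (add_mem (add_mem (AddSubgroup.zsmul_mem _ h1 _)
        (AddSubgroup.zsmul_mem _ h3' _)) (AddSubgroup.zsmul_mem _ h5 _))
        (AddSubgroup.zsmul_mem _ h02 _)) (AddSubgroup.zsmul_mem _ h04 _))
        (AddSubgroup.zsmul_mem _ h00 _)
  rw [hker]
  exact ker_index d (by omega)
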